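/- Let w_*(x) = (√2/2)/(e^{x/4} + e^{-x/4}). Then the function φ(x) = −(x/2)·w_*(x) satisfies the equation −φ'' + (1/16)φ − w_*²·φ = w_*' on ℝ. -/

import Mathlib

open Real

noncomputable def wstar (x : ℝ) : ℝ :=
  (Real.sqrt 2 / 2) / (Real.exp (x / 4) + Real.exp (-(x / 4)))

noncomputable def phi (x : ℝ) : ℝ := -(x / 2) * wstar x

noncomputable def wd (x : ℝ) : ℝ :=
  -(Real.sqrt 2 / 2) * ((Real.exp (x / 4) - Real.exp (-(x / 4))) / 4) /
    (Real.exp (x / 4) + Real.exp (-(x / 4))) ^ 2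

noncomputable def pd (x : ℝ) : ℝ := -(1 / 2) * wstar x + -(x / 2) * wd x

lemma hDpos (x : ℝ) : 0 < Real.exp (x / 4) + Real.exp (-(x / 4)) := by positivity

lemma hA (x : ℝ) : HasDerivAt (fun x : ℝ => Real.exp (x / 4)) (Real.exp (x / 4) * (1 / 4)) x :=
  ((hasDerivAt_id x).div_const 4).exp

lemma hB (x : ℝ) :
    HasDerivAt (fun x : ℝ => Real.exp (-(x / 4))) (Real.exp (-(x / 4)) * -(1 / 4)) x :=
  ((hasDerivAt_id x).div_const 4).neg.exp

lemma hD (x : ℝ) :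
    HasDerivAt (fun x : ℝ => Real.exp (x / 4) + Real.exp (-(x / 4)))
      (Real.exp (x / 4) * (1 / 4) + Real.exp (-(x / 4)) * -(1 / 4)) x :=
  (hA x).add (hB x)

lemma hw (x : ℝ) : HasDerivAt wstar (wd x) x := by
  have h := (hasDerivAt_const x (Real.sqrt 2 / 2)).div (hD x) (hDpos x).ne'
  have heq : (0 * (Real.exp (x / 4) + Real.exp (-(x / 4))) -
      Real.sqrt 2 / 2 * (Real.exp (x / 4) * (1 / 4) + Real.exp (-(x / 4)) * -(1 / 4))) /
      (Real.exp (x / 4) + Real.exp (-(x / 4))) ^ 2 = wd x := by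
    unfold wd; ring
  exact heq ▸ h

lemma hphi (x : ℝ) : HasDerivAt phi (pd x) x := by
  have hu : HasDerivAt (fun x : ℝ => -(x / 2)) (-(1 / 2)) x :=
    ((hasDerivAt_id x).div_const 2).neg
  have := hu.mul (hw x)
  have heq : -(1 / 2) * wstar x + -(x / 2) * wd x = pd x := rfl
  exact heq ▸ this

lemma hwdd (x : ℝ) :
    HasDerivAt wd
      ((-(Real.sqrt 2 / 2) * ((Real.exp (x / 4) * (1 / 4) - Real.exp (-(x / 4)) * -(1 / 4)) / 4) *
          (Real.exp (x / 4) + Real.exp (-(x / 4))) ^ 2 -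
        -(Real.sqrt 2 / 2) * ((Real.exp (x / 4) - Real.exp (-(x / 4))) / 4) *
          (2 * (Real.exp (x / 4) + Real.exp (-(x / 4))) ^ 1 *
            (Real.exp (x / 4) * (1 / 4) + Real.exp (-(x / 4)) * -(1 / 4)))) /
        ((Real.exp (x / 4) + Real.exp (-(x / 4))) ^ 2) ^ 2) x := by
  have hN := (((hA x).sub (hB x)).div_const 4).const_mul (-(Real.sqrt 2 / 2))
  have hDen := (hD x).pow 2
  have hne : (Real.exp (x / 4) + Real.exp (-(x / 4))) ^ 2 ≠ 0 := by positivity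
  exact hN.div hDen hne

lemma hpd (x : ℝ) :
    HasDerivAt pd
      (-(1 / 2) * wd x + (-(1 / 2) * wd x + -(x / 2) *
        ((-(Real.sqrt 2 / 2) * ((Real.exp (x / 4) * (1 / 4) - Real.exp (-(x / 4)) * -(1 / 4)) / 4) *
            (Real.exp (x / 4) + Real.exp (-(x / 4))) ^ 2 -
          -(Real.sqrt 2 / 2) * ((Real.exp (x / 4) - Real.exp (-(x / 4))) / 4) *
            (2 * (Real.exp (x / 4) + Real.exp (-(x / 4))) ^ 1 *
              (Real.exp (x / 4) * (1 / 4) + Real.exp (-(x / 4)) * -(1 / 4)))) /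
          ((Real.exp (x / 4) + Real.exp (-(x / 4))) ^ 2) ^ 2))) x := by
  have hu : HasDerivAt (fun x : ℝ => -(x / 2)) (-(1 / 2)) x :=
    ((hasDerivAt_id x).div_const 2).neg
  exact ((hw x).const_mul (-(1 / 2))).add (hu.mul (hwdd x))

theorem stmt9 :
    ∀ x : ℝ,
      -deriv (deriv phi) x + (1 / 16) * phi x - (wstar x) ^ 2 * phi x = deriv wstar x := by
  intro x
  have hdphi : deriv phi = pd := funext fun y => (hphi y).deriv
  rw [hdphi, (hpd x).deriv, (hw x).deriv]
  unfold phi wstar wd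
  have hA0 : (0:ℝ) < Real.exp (x / 4) := Real.exp_pos _
  have hB1 : Real.exp (-(x / 4)) = (Real.exp (x / 4))⁻¹ := by
    rw [← Real.exp_neg]
  rw [hB1]
  have hs2 : Real.sqrt 2 ^ 2 = 2 := Real.sq_sqrt (by norm_num)
  have hsum : Real.exp (x / 4) + (Real.exp (x / 4))⁻¹ ≠ 0 := by positivity
  have hs3 : Real.sqrt 2 ^ 3 = 2 * Real.sqrt 2 := by rw [pow_succ, hs2]
  field_simp
  ring_nf
  rw [hs2]
  ring
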